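/- Suppose v : (0,R) → ℝ is positive and satisfies (k/(n·C(n−1,k−1)))^{1/k}·r ≤ v(r) ≤ C(n−1,k)^{−1/k}·r for all r ∈ (0,R), where n ≥ 3 and 2 ≤ k ≤ n−1. Then 0 ≤ (1/C(n−1,k−1))·(r/v(r))^k − (n−k)/k ≤ 1 for all r ∈ (0,R). Consequently any solution u of u'' = F_{k,n}(r,u') with u'(r) = v(r) has u'' ≥ 0, i.e. u is convex. -/

import Mathlib

open Real

/-- The speed function `F_{k,n}(x,y)`. -/
noncomputable def Fkn (k n : ℕ) (x y : ℝ) : ℝ :=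
  (y / x) * (1 + y ^ 2) *
    ((1 / ((n - 1).choose (k - 1) : ℝ)) * (x / y) ^ k - ((n : ℝ) - k) / k)

/-- if `v` is positive on `(0,R)` and lies between the sub- and
super-solution barriers `v₁(r) = (k/(n C(n−1,k−1)))^{1/k} r` and
`v₂(r) = C(n−1,k)^{−1/k} r`, then
`0 ≤ (1/C(n−1,k−1))(r/v)^k − (n−k)/k ≤ 1`, and consequently any solution `u` of
`u'' = F_{k,n}(r,u')` with `u' = v` has `u'' ≥ 0`, i.e. `u` is convex. -/
theorem stmt4 (n k : ℕ) (hn : 3 ≤ n) (hk : 2 ≤ k) (hkn : k ≤ n - 1)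
    (R : ℝ) (v : ℝ → ℝ)
    (hpos : ∀ r ∈ Set.Ioo (0 : ℝ) R, 0 < v r)
    (hlow : ∀ r ∈ Set.Ioo (0 : ℝ) R,
      ((k : ℝ) / (n * ((n - 1).choose (k - 1) : ℝ))) ^ ((1 : ℝ) / k) * r ≤ v r)
    (hupp : ∀ r ∈ Set.Ioo (0 : ℝ) R,
      v r ≤ (((n - 1).choose k : ℝ)) ^ (-(1 : ℝ) / k) * r) :
    ∀ r ∈ Set.Ioo (0 : ℝ) R,
      (0 ≤ (1 / ((n - 1).choose (k - 1) : ℝ)) * (r / v r) ^ k - ((n : ℝ) - k) / k ∧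
        (1 / ((n - 1).choose (k - 1) : ℝ)) * (r / v r) ^ k - ((n : ℝ) - k) / k ≤ 1) ∧
      (∀ u : ℝ → ℝ, (∀ s ∈ Set.Ioo (0 : ℝ) R, deriv u s = v s) →
        deriv (deriv u) r = Fkn k n r (deriv u r) → 0 ≤ deriv (deriv u) r) := by
  intro r hr
  obtain ⟨hr0, hrR⟩ := hr
  have hv : 0 < v r := hpos r ⟨hr0, hrR⟩
  have hk0 : 0 < k := by omega
  have hkn' : k < n := by omega
  have hkR : (0:ℝ) < (k:ℝ) := by positivity
  have hnR : (0:ℝ) < (n:ℝ) := by positivity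
  have hC1 : 0 < (n-1).choose (k-1) := Nat.choose_pos (by omega)
  have hC2 : 0 < (n-1).choose k := Nat.choose_pos hkn
  set C1 : ℝ := ((n-1).choose (k-1) : ℝ) with hC1def
  set C2 : ℝ := ((n-1).choose k : ℝ) with hC2def
  have hC1R : (0:ℝ) < C1 := by rw [hC1def]; exact_mod_cast hC1
  have hC2R : (0:ℝ) < C2 := by rw [hC2def]; exact_mod_cast hC2
  have hid : C2 * (k:ℝ) = C1 * ((n:ℝ) - k) := by
    have h1 : (n-1).choose k * k = (n-1).choose (k-1) * (n - k) := by
      have h := Nat.choose_succ_right_eq (n-1) (k-1)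
      have e1 : k - 1 + 1 = k := by omega
      have e2 : n - 1 - (k - 1) = n - k := by omega
      rw [e1, e2] at h
      exact h
    have hc : ((n:ℝ) - k) = ((n - k : ℕ) : ℝ) := by
      rw [Nat.cast_sub (le_of_lt hkn')]
    rw [hC1def, hC2def, hc]
    exact_mod_cast h1
  have hkne : (k:ℝ) ≠ 0 := ne_of_gt hkR
  -- upper bound on X := (r / v r)^k
  set a : ℝ := (k:ℝ) / ((n:ℝ) * C1) with hadef
  have ha : 0 < a := by positivity
  have hb : 0 < a ^ ((1:ℝ)/k) := Real.rpow_pos_of_pos ha _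
  have hbk : (a ^ ((1:ℝ)/k)) ^ k = a := by
    rw [← Real.rpow_natCast (a ^ ((1:ℝ)/k)) k, ← Real.rpow_mul ha.le,
      one_div_mul_cancel hkne, Real.rpow_one]
  have hlow' := hlow r ⟨hr0, hrR⟩
  have hXupp : (r / v r) ^ k ≤ a⁻¹ := by
    have h1 : r / v r ≤ (a ^ ((1:ℝ)/k))⁻¹ := by
      rw [div_le_iff₀ hv, inv_mul_eq_div, le_div_iff₀ hb]
      linarith [hlow']
    calc (r / v r) ^ k ≤ ((a ^ ((1:ℝ)/k))⁻¹) ^ k := by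
          apply pow_le_pow_left₀ (by positivity) h1
      _ = a⁻¹ := by rw [inv_pow, hbk]
  -- lower bound on X
  have hc2 : 0 < C2 ^ ((1:ℝ)/k) := Real.rpow_pos_of_pos hC2R _
  have hc2k : (C2 ^ ((1:ℝ)/k)) ^ k = C2 := by
    rw [← Real.rpow_natCast (C2 ^ ((1:ℝ)/k)) k, ← Real.rpow_mul hC2R.le,
      one_div_mul_cancel hkne, Real.rpow_one]
  have hupp' := hupp r ⟨hr0, hrR⟩
  have hXlow : C2 ≤ (r / v r) ^ k := by
    have h1 : C2 ^ ((1:ℝ)/k) ≤ r / v r := by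
      rw [le_div_iff₀ hv]
      have : C2 ^ (-(1:ℝ)/k) = (C2 ^ ((1:ℝ)/k))⁻¹ := by
        rw [neg_div, Real.rpow_neg hC2R.le]
      rw [this] at hupp'
      calc C2 ^ ((1:ℝ)/k) * v r ≤ C2 ^ ((1:ℝ)/k) * ((C2 ^ ((1:ℝ)/k))⁻¹ * r) := by
            apply mul_le_mul_of_nonneg_left hupp' hc2.le
        _ = r := by field_simp
    calc C2 = (C2 ^ ((1:ℝ)/k)) ^ k := hc2k.symm
      _ ≤ (r / v r) ^ k := pow_le_pow_left₀ hc2.le h1 k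
  have hainv : a⁻¹ = (n:ℝ) * C1 / k := by
    rw [hadef]; field_simp
  have hE0 : 0 ≤ (1 / C1) * (r / v r) ^ k - ((n:ℝ) - k) / k := by
    have h1 : ((n:ℝ) - k) / k = C2 / C1 := by
      rw [div_eq_div_iff hkR.ne' hC1R.ne']; linarith [hid]
    rw [h1]
    have : C2 / C1 ≤ (r / v r) ^ k / C1 := by
      gcongr
    calc (0:ℝ) = C2 / C1 - C2 / C1 := by ring
      _ ≤ (1 / C1) * (r / v r) ^ k - C2 / C1 := by
          rw [one_div, inv_mul_eq_div]; linarith [this]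
  have hE1 : (1 / C1) * (r / v r) ^ k - ((n:ℝ) - k) / k ≤ 1 := by
    have h1 : (1 / C1) * (r / v r) ^ k ≤ (1 / C1) * a⁻¹ := by
      apply mul_le_mul_of_nonneg_left hXupp (by positivity)
    have h2 : (1 / C1) * a⁻¹ = (n:ℝ) / k := by
      rw [hainv]; field_simp
    have h3 : (n:ℝ) / k - ((n:ℝ) - k) / k = 1 := by field_simp; ring
    linarith [h1]
  refine ⟨⟨hE0, hE1⟩, ?_⟩
  intro u hder heq
  rw [heq, hder r ⟨hr0, hrR⟩] at *
  rw [heq]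
  unfold Fkn
  rw [← hC1def]
  apply mul_nonneg (mul_nonneg _ _)
  · exact hE0
  · positivity
  · positivity
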